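/- Let λ₁,…,λ_d be (locally defined, analytic) functions on an open subset of a finite-dimensional complex vector space, and let p₁,…,p_n be functions such that Σ_{i=0}^{n} p_i(x) t^i = c · Π_{j=1}^{d} (1 + λ_j(x) t)^{s_j} identically in t, where c ≠ 0 is a constant, p₀ = c, and s_j ≥ 1 are integers with Σ s_j = n. If at a point x₀ the values λ₁(x₀),…,λ_d(x₀) are pairwise distinct, then the linear span of the differentials dλ₁(x₀),…,dλ_d(x₀) equals the linear span of dp₁(x₀),…,dp_n(x₀). -/

import Mathlib

open Module


private lemma span_of_curve {m : ℕ} {M : Type*} [AddCommGroup M] [Module ℂ M]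
    (G : Fin m → ℂ → ℂ)
    (hind : ∀ α : Fin m → ℂ, (∀ t, ∑ j, α j * G j t = 0) → ∀ j, α j = 0)
    (w : Fin m → M) (Q : Submodule ℂ M)
    (hQ : ∀ t, (∑ j, G j t • w j) ∈ Q) : ∀ j, w j ∈ Q := by
  classical
  have hspan : Submodule.span ℂ (Set.range fun t : ℂ => fun j => G j t) = ⊤ := by
    by_contra h
    obtain ⟨φ, hφ0, hφ⟩ := Submodule.exists_dual_map_eq_bot_of_lt_top
      (lt_top_iff_ne_top.2 h) inferInstance
    have hker : ∀ t : ℂ, φ (fun j => G j t) = 0 := by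
      intro t
      have hmem : (fun j => G j t) ∈ Submodule.span ℂ (Set.range fun t : ℂ => fun j => G j t) :=
        Submodule.subset_span ⟨t, rfl⟩
      have h2 := Submodule.mem_map_of_mem (f := φ) hmem
      rw [hφ] at h2
      simpa using h2
    have hrepr : ∀ v : Fin m → ℂ, φ v = ∑ j, v j * φ (Pi.single j 1) := by
      intro v
      have hv : v = ∑ j, v j • (Pi.single j 1 : Fin m → ℂ) := by
        funext k
        simp [Pi.single_apply, Finset.sum_apply]
      conv_lhs => rw [hv]
      rw [map_sum]
      simp [map_smul, smul_eq_mul]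
    have hα : ∀ j, φ (Pi.single j 1) = 0 := by
      apply hind
      intro t
      have h3 := hker t
      rw [hrepr] at h3
      simpa [mul_comm] using h3
    exact hφ0 (LinearMap.ext fun v => by rw [hrepr]; simp [hα])
  intro j
  have hmem : (Pi.single j 1 : Fin m → ℂ) ∈
      Submodule.span ℂ (Set.range fun t : ℂ => fun j => G j t) := by
    rw [hspan]; trivial
  have key : ∀ v : Fin m → ℂ, v ∈ Submodule.span ℂ (Set.range fun t : ℂ => fun j => G j t) →
      (∑ k, v k • w k) ∈ Q := by
    intro v hv
    induction hv using Submodule.span_induction with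
    | mem x hx => obtain ⟨t, rfl⟩ := hx; exact hQ t
    | zero => simp [Q.zero_mem]
    | add x y hx hy ihx ihy => simpa [add_smul, Finset.sum_add_distrib] using Q.add_mem ihx ihy
    | smul a x hx ih => simpa [Finset.smul_sum, smul_smul] using Q.smul_mem a ih
  simpa [Pi.single_apply] using key _ hmem

private lemma mono_indep {n : ℕ} (α : Fin n → ℂ)
    (h : ∀ t : ℂ, ∑ i, α i * t ^ ((i : ℕ) + 1) = 0) : ∀ i, α i = 0 := by
  classical
  intro i
  set P : Polynomial ℂ := ∑ i, Polynomial.C (α i) * Polynomial.X ^ ((i : ℕ) + 1) with hP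
  have hev : ∀ t, P.eval t = 0 := by
    intro t
    rw [hP]
    simpa [Polynomial.eval_finset_sum] using h t
  have hP0 : P = 0 := by
    apply Polynomial.eq_zero_of_infinite_isRoot
    have : {x : ℂ | P.IsRoot x} = Set.univ := by
      ext x; simp [Polynomial.IsRoot, hev]
    rw [this]
    exact Set.infinite_univ
  have hc : P.coeff ((i : ℕ) + 1) = α i := by
    rw [hP, Polynomial.finset_sum_coeff]
    rw [Finset.sum_eq_single i]
    · simp
    · intro b _ hb
      have hne : ¬((i : ℕ) + 1 = (b : ℕ) + 1) := by
        simp only [add_left_inj]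
        exact fun hh => hb (Fin.ext hh.symm)
      simp [Polynomial.coeff_C_mul, Polynomial.coeff_X_pow, hne, Fin.val_inj, hb.symm]
    · intro hi; exact absurd (Finset.mem_univ i) hi
  rw [← hc, hP0]
  simp

private lemma g_indep {d : ℕ} (μ : Fin d → ℂ) (hμ : Function.Injective μ)
    (s : Fin d → ℕ) (hs : ∀ j, 1 ≤ s j) (c : ℂ) (hc : c ≠ 0)
    (α : Fin d → ℂ)
    (h : ∀ t : ℂ, ∑ j, α j *
      (c * ((∏ k ∈ Finset.univ.erase j, (1 + μ k * t) ^ s k) *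
        ((s j : ℂ) * (1 + μ j * t) ^ (s j - 1) * t))) = 0) :
    ∀ j, α j = 0 := by
  classical
  set β : Fin d → ℂ := fun j => α j * (c * (s j : ℂ)) with hβ
  have hfact : ∀ (t : ℂ) (j : Fin d), α j * (c * ((∏ k ∈ Finset.univ.erase j, (1 + μ k * t) ^ s k) *
        ((s j : ℂ) * (1 + μ j * t) ^ (s j - 1) * t))) =
      (t * ∏ k, (1 + μ k * t) ^ (s k - 1)) *
        (β j * ∏ k ∈ Finset.univ.erase j, (1 + μ k * t)) := by
    intro t j
    have h1 : ∏ k, (1 + μ k * t) ^ (s k - 1) =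
        (1 + μ j * t) ^ (s j - 1) * ∏ k ∈ Finset.univ.erase j, (1 + μ k * t) ^ (s k - 1) :=
      (Finset.mul_prod_erase Finset.univ _ (Finset.mem_univ j)).symm
    have h2 : ∏ k ∈ Finset.univ.erase j, (1 + μ k * t) ^ s k =
        (∏ k ∈ Finset.univ.erase j, (1 + μ k * t) ^ (s k - 1)) *
          ∏ k ∈ Finset.univ.erase j, (1 + μ k * t) := by
      rw [← Finset.prod_mul_distrib]
      refine Finset.prod_congr rfl fun k _ => ?_
      rw [← pow_succ, Nat.sub_add_cancel (hs k)]
    rw [h1, h2, hβ]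
    ring
  -- the polynomial W
  set W : Polynomial ℂ := ∑ j, Polynomial.C (β j) *
      ∏ k ∈ Finset.univ.erase j, (1 + Polynomial.C (μ k) * Polynomial.X) with hW
  have hWev : ∀ t : ℂ, W.eval t = ∑ j, β j * ∏ k ∈ Finset.univ.erase j, (1 + μ k * t) := by
    intro t
    rw [hW]
    simp [Polynomial.eval_finset_sum, Polynomial.eval_prod]
  have hW0 : W = 0 := by
    apply Polynomial.eq_zero_of_infinite_isRoot
    have hsub : {t : ℂ | t ≠ 0 ∧ ∀ k, 1 + μ k * t ≠ 0} ⊆ {t | W.IsRoot t} := by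
      rintro t ⟨ht0, htk⟩
      have h4 := h t
      rw [Finset.sum_congr rfl (fun j _ => hfact t j), ← Finset.mul_sum] at h4
      have hA : (t * ∏ k, (1 + μ k * t) ^ (s k - 1)) ≠ 0 :=
        mul_ne_zero ht0 (Finset.prod_ne_zero_iff.2 fun k _ => pow_ne_zero _ (htk k))
      have h5 := (mul_eq_zero.1 h4).resolve_left hA
      simpa [Polynomial.IsRoot, hWev] using h5
    apply Set.Infinite.mono hsub
    have hfin : ({0} ∪ ⋃ k, {t : ℂ | 1 + μ k * t = 0}).Finite := by
      apply Set.Finite.union (Set.finite_singleton 0)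
      apply Set.finite_iUnion
      intro k
      apply Set.Subsingleton.finite
      intro a ha b hb
      simp only [Set.mem_setOf_eq] at ha hb
      have hk : μ k ≠ 0 := by
        intro h0; rw [h0] at ha; simp at ha
      have h9 : μ k * a = μ k * b := add_left_cancel (ha.trans hb.symm)
      exact mul_left_cancel₀ hk h9
    have hcompl : ({0} ∪ ⋃ k, {t : ℂ | 1 + μ k * t = 0})ᶜ ⊆
        {t : ℂ | t ≠ 0 ∧ ∀ k, 1 + μ k * t ≠ 0} := by
      intro t ht
      simp only [Set.compl_union, Set.mem_inter_iff, Set.mem_compl_iff, Set.mem_singleton_iff,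
        Set.mem_iUnion, Set.mem_setOf_eq, not_exists] at ht
      exact ⟨ht.1, ht.2⟩
    exact hfin.infinite_compl.mono hcompl
  have hWt : ∀ t : ℂ, ∑ j, β j * ∏ k ∈ Finset.univ.erase j, (1 + μ k * t) = 0 := by
    intro t
    rw [← hWev t, hW0, Polynomial.eval_zero]
  have hβ0 : ∀ j, μ j ≠ 0 → β j = 0 := by
    intro j hj
    have h6 := hWt (-(μ j)⁻¹)
    rw [Finset.sum_eq_single j] at h6
    · refine (mul_eq_zero.1 h6).resolve_right ?_
      apply Finset.prod_ne_zero_iff.2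
      intro k hk hzero
      apply (Finset.mem_erase.1 hk).1
      apply hμ
      show μ k = μ j
      have h11 : μ k * (μ j)⁻¹ = 1 := by
        have h12 : μ k * (μ j)⁻¹ = -(1 + μ k * (-(μ j)⁻¹)) + 1 := by ring
        rw [h12, hzero]; ring
      exact (mul_inv_eq_one₀ hj).1 h11
    · intro b _ hb
      apply mul_eq_zero_of_right
      apply Finset.prod_eq_zero (Finset.mem_erase.2 ⟨fun hh => hb hh.symm, Finset.mem_univ j⟩)
      rw [mul_neg, mul_inv_cancel₀ hj]
      ring
    · intro hj'; exact absurd (Finset.mem_univ j) hj'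
  have hβall : ∀ j, β j = 0 := by
    intro j
    by_cases hj : μ j = 0
    · have h7 := hWt 0
      rw [Finset.sum_eq_single j] at h7
      · simpa using h7
      · intro b _ hb
        have hbne : μ b ≠ 0 := fun h0 => hb (hμ (h0.trans hj.symm))
        rw [hβ0 b hbne, zero_mul]
      · intro hj'; exact absurd (Finset.mem_univ j) hj'
    · exact hβ0 j hj
  intro j
  have hcs : c * (s j : ℂ) ≠ 0 :=
    mul_ne_zero hc (Nat.cast_ne_zero.2 (by have := hs j; omega))
  have h10 := hβall j
  simp only [hβ] at h10
  exact (mul_eq_zero.1 h10).resolve_right hcs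

/-- If `Σ_{i=0}^{n} pᵢ(x) tⁱ = c · Π_{j=1}^{d} (1 + λⱼ(x) t)^{sⱼ}` identically in `t` on
an open set `U` (with `c ≠ 0`, `p₀ = c`, `sⱼ ≥ 1`, `Σ sⱼ = n`), and the values
`λ₁(x₀),…,λ_d(x₀)` are pairwise distinct, then the span of the differentials
`dλ₁(x₀),…,dλ_d(x₀)` equals the span of `dp₁(x₀),…,dp_n(x₀)`. -/
theorem stmt19 {E : Type*} [NormedAddCommGroup E] [NormedSpace ℂ E]
    [FiniteDimensional ℂ E]
    (U : Set E) (hU : IsOpen U) (x0 : E) (hx0 : x0 ∈ U)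
    (d n : ℕ) (lam : Fin d → E → ℂ) (p : Fin (n + 1) → E → ℂ)
    (c : ℂ) (hc : c ≠ 0)
    (s : Fin d → ℕ) (hs : ∀ j, 1 ≤ s j) (hsum : ∑ j, s j = n)
    (hp0 : ∀ x ∈ U, p 0 x = c)
    (hlam_an : ∀ j, AnalyticAt ℂ (lam j) x0)
    (hp_an : ∀ i, AnalyticAt ℂ (p i) x0)
    (hid : ∀ x ∈ U, ∀ t : ℂ,
      ∑ i : Fin (n + 1), p i x * t ^ (i : ℕ) = c * ∏ j, (1 + lam j x * t) ^ s j)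
    (hdist : Function.Injective fun j => lam j x0) :
    Submodule.span ℂ (Set.range fun j => fderiv ℂ (lam j) x0) =
      Submodule.span ℂ (Set.range fun i : Fin n => fderiv ℂ (p i.succ) x0) := by
  classical
  have hUnhds : U ∈ nhds x0 := hU.mem_nhds hx0
  have hDp0 : fderiv ℂ (p 0) x0 = 0 := by
    have hev : p 0 =ᶠ[nhds x0] fun _ => c :=
      Filter.eventuallyEq_of_mem hUnhds fun x hx => hp0 x hx
    rw [hev.fderiv_eq]
    exact fderiv_const_apply c
  -- the coefficient functions
  set G : Fin d → ℂ → ℂ := fun j t =>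
    c * ((∏ k ∈ Finset.univ.erase j, (1 + lam k x0 * t) ^ s k) *
      ((s j : ℂ) * (1 + lam j x0 * t) ^ (s j - 1) * t)) with hG
  -- the key derivative identity
  have key : ∀ t : ℂ,
      ∑ i : Fin n, t ^ ((i : ℕ) + 1) • fderiv ℂ (p i.succ) x0 =
        ∑ j, G j t • fderiv ℂ (lam j) x0 := by
    intro t
    have hL : HasFDerivAt (fun x => ∑ i : Fin (n + 1), p i x * t ^ (i : ℕ))
        (∑ i : Fin (n + 1), t ^ (i : ℕ) • fderiv ℂ (p i) x0) x0 :=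
      HasFDerivAt.fun_sum fun i _ => ((hp_an i).differentiableAt.hasFDerivAt).mul_const _
    have hfac : ∀ j : Fin d, HasFDerivAt (fun x => (1 + lam j x * t) ^ s j)
        (((s j : ℂ) * (1 + lam j x0 * t) ^ (s j - 1) * (1 * t)) • fderiv ℂ (lam j) x0) x0 := by
      intro j
      have hd : HasDerivAt (fun z : ℂ => (1 + z * t) ^ s j)
          ((s j : ℂ) * (1 + lam j x0 * t) ^ (s j - 1) * (1 * t)) (lam j x0) := by
        have h1 : HasDerivAt (fun z : ℂ => 1 + z * t) (1 * t) (lam j x0) :=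
          ((hasDerivAt_id (lam j x0)).mul_const t).const_add 1
        exact h1.pow (s j)
      exact hd.comp_hasFDerivAt x0 ((hlam_an j).differentiableAt.hasFDerivAt)
    have hprod := HasFDerivAt.finset_prod (u := Finset.univ)
      (g := fun (j : Fin d) x => (1 + lam j x * t) ^ s j)
      (g' := fun j => ((s j : ℂ) * (1 + lam j x0 * t) ^ (s j - 1) * (1 * t)) •
        fderiv ℂ (lam j) x0)
      (fun j _ => hfac j)
    have hR := hprod.const_mul c
    have heq : (fun x => ∑ i : Fin (n + 1), p i x * t ^ (i : ℕ)) =ᶠ[nhds x0]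
        (fun x => c * ∏ j ∈ Finset.univ, (1 + lam j x * t) ^ s j) :=
      Filter.eventuallyEq_of_mem hUnhds fun x hx => hid x hx t
    have hune := (hR.congr_of_eventuallyEq heq).unique hL
    have hlhs : ∑ i : Fin n, t ^ ((i : ℕ) + 1) • fderiv ℂ (p i.succ) x0 =
        ∑ i : Fin (n + 1), t ^ (i : ℕ) • fderiv ℂ (p i) x0 := by
      rw [Fin.sum_univ_succ (f := fun i : Fin (n + 1) => t ^ (i : ℕ) • fderiv ℂ (p i) x0)]
      simp [hDp0, Fin.val_succ]
    rw [hlhs, ← hune]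
    rw [Finset.smul_sum]
    refine Finset.sum_congr rfl fun j _ => ?_
    rw [smul_smul, smul_smul]
    congr 1
    beta_reduce
    ring
  have dir1 : ∀ i : Fin n, fderiv ℂ (p i.succ) x0 ∈
      Submodule.span ℂ (Set.range fun j => fderiv ℂ (lam j) x0) := by
    apply span_of_curve (fun (i : Fin n) (t : ℂ) => t ^ ((i : ℕ) + 1)) mono_indep
    intro t
    rw [key t]
    exact Submodule.sum_mem _ fun j _ =>
      Submodule.smul_mem _ _ (Submodule.subset_span ⟨j, rfl⟩)
  have dir2 : ∀ j : Fin d, fderiv ℂ (lam j) x0 ∈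
      Submodule.span ℂ (Set.range fun i : Fin n => fderiv ℂ (p i.succ) x0) := by
    apply span_of_curve G
    · intro α hα
      apply g_indep (fun j => lam j x0) hdist s hs c hc α
      intro t
      simpa [hG] using hα t
    · intro t
      rw [← key t]
      exact Submodule.sum_mem _ fun i _ =>
        Submodule.smul_mem _ _ (Submodule.subset_span ⟨i, rfl⟩)
  apply le_antisymm
  · rw [Submodule.span_le]
    rintro _ ⟨j, rfl⟩
    exact dir2 j
  · rw [Submodule.span_le]
    rintro _ ⟨i, rfl⟩
    exact dir1 i
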